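/- Let d₁ be odd and d₂ coprime to d₁, both greater than 1. Then there do not exist real polynomials P̃, Q̃ and a nonconstant real trigonometric polynomial W with W(0) = W(2π) such that cos(d₁θ) = P̃(W(θ)) and sin(d₂θ) = Q̃(W(θ)), because the derivatives of cos(d₁θ) and sin(d₂θ), viewed as entire functions of a complex variable θ, have no common zero. -/

import Mathlib

open Real

theorem no_common_composition_factor_cos_sin
    (d₁ d₂ : ℕ) (hd₁ : 1 < d₁) (hd₂ : 1 < d₂) (hodd : Odd d₁)
    (hcop : Nat.Coprime d₁ d₂) :
    ¬ ∃ (Pt Qt : Polynomial ℝ) (n : ℕ) (a b : ℕ → ℝ),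
        (∃ k, 1 ≤ k ∧ k ≤ n ∧ (a k ≠ 0 ∨ b k ≠ 0)) ∧
        ((∑ k ∈ Finset.range (n + 1),
            (a k * Real.cos (k * (0:ℝ)) + b k * Real.sin (k * (0:ℝ)))) =
         (∑ k ∈ Finset.range (n + 1),
            (a k * Real.cos (k * (2 * π)) + b k * Real.sin (k * (2 * π))))) ∧
        (∀ θ : ℝ, Real.cos (d₁ * θ) =
            Pt.eval (∑ k ∈ Finset.range (n + 1),
              (a k * Real.cos (k * θ) + b k * Real.sin (k * θ)))) ∧
        (∀ θ : ℝ, Real.sin (d₂ * θ) =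
            Qt.eval (∑ k ∈ Finset.range (n + 1),
              (a k * Real.cos (k * θ) + b k * Real.sin (k * θ)))) := by
  rintro ⟨Pt, Qt, n, a, b, -, hper, hP, hQ⟩
  -- the trigonometric polynomial W and its derivative
  have hWd : ∀ θ : ℝ,
      HasDerivAt (fun θ : ℝ => ∑ k ∈ Finset.range (n + 1),
          (a k * Real.cos (k * θ) + b k * Real.sin (k * θ)))
        (∑ k ∈ Finset.range (n + 1),
          (a k * (-Real.sin (k * θ) * k) + b k * (Real.cos (k * θ) * k))) θ := by
    intro θ
    apply HasDerivAt.fun_sum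
    intro k _
    have hk : HasDerivAt (fun θ : ℝ => (k : ℝ) * θ) (k : ℝ) θ := by
      simpa using (hasDerivAt_id θ).const_mul (k : ℝ)
    exact (hk.cos.const_mul (a k)).add (hk.sin.const_mul (b k))
  -- Rolle: W' vanishes at some c ∈ (0, 2π)
  obtain ⟨c, hcmem, hc0⟩ :=
    exists_hasDerivAt_eq_zero (f := fun θ : ℝ => ∑ k ∈ Finset.range (n + 1),
        (a k * Real.cos (k * θ) + b k * Real.sin (k * θ)))
      (f' := fun θ : ℝ => ∑ k ∈ Finset.range (n + 1),
        (a k * (-Real.sin (k * θ) * k) + b k * (Real.cos (k * θ) * k)))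
      (by positivity)
      (fun x _ => (hWd x).continuousAt.continuousWithinAt)
      hper
      (fun x _ => hWd x)
  set Wc : ℝ := ∑ k ∈ Finset.range (n + 1),
      (a k * Real.cos (k * c) + b k * Real.sin (k * c)) with hWc
  -- derivative of the composition at c is 0
  have hcompP : HasDerivAt (fun θ : ℝ => Real.cos (d₁ * θ)) 0 c := by
    have h1 : HasDerivAt (fun θ : ℝ => Pt.eval (∑ k ∈ Finset.range (n + 1),
        (a k * Real.cos (k * θ) + b k * Real.sin (k * θ))))
        (Pt.derivative.eval Wc * 0) c := by
      rw [← hc0]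
      exact (Pt.hasDerivAt Wc).comp c (hWd c)
    rw [mul_zero] at h1
    exact h1.congr_of_eventuallyEq (Filter.Eventually.of_forall hP)
  have hcompQ : HasDerivAt (fun θ : ℝ => Real.sin (d₂ * θ)) 0 c := by
    have h1 : HasDerivAt (fun θ : ℝ => Qt.eval (∑ k ∈ Finset.range (n + 1),
        (a k * Real.cos (k * θ) + b k * Real.sin (k * θ))))
        (Qt.derivative.eval Wc * 0) c := by
      rw [← hc0]
      exact (Qt.hasDerivAt Wc).comp c (hWd c)
    rw [mul_zero] at h1
    exact h1.congr_of_eventuallyEq (Filter.Eventually.of_forall hQ)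
  -- direct derivatives
  have hd1 : HasDerivAt (fun θ : ℝ => (d₁ : ℝ) * θ) (d₁ : ℝ) c := by
    simpa using (hasDerivAt_id c).const_mul (d₁ : ℝ)
  have hd2 : HasDerivAt (fun θ : ℝ => (d₂ : ℝ) * θ) (d₂ : ℝ) c := by
    simpa using (hasDerivAt_id c).const_mul (d₂ : ℝ)
  have hsin0 : Real.sin (d₁ * c) = 0 := by
    have h := hd1.cos.unique hcompP
    have hne : (d₁ : ℝ) ≠ 0 := by positivity
    have h2 : Real.sin (d₁ * c) * (d₁ : ℝ) = 0 := by linarith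
    exact (mul_eq_zero.mp h2).resolve_right hne
  have hcos0 : Real.cos (d₂ * c) = 0 := by
    have h := hd2.sin.unique hcompQ
    have hne : (d₂ : ℝ) ≠ 0 := by positivity
    have h2 : Real.cos (d₂ * c) * (d₂ : ℝ) = 0 := by linarith
    exact (mul_eq_zero.mp h2).resolve_right hne
  -- extract integer relations
  obtain ⟨m, hm⟩ := Real.sin_eq_zero_iff.mp hsin0
  obtain ⟨l, hl⟩ := Real.cos_eq_zero_iff.mp hcos0
  -- 2 * d₂ * m = d₁ * (2l + 1), even = odd, contradiction
  have hπ : (π : ℝ) ≠ 0 := Real.pi_ne_zero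
  have key : ((2 * d₂ * m : ℤ) : ℝ) = ((d₁ : ℤ) * (2 * l + 1) : ℝ) := by
    have h1 : (m : ℝ) * π = d₁ * c := hm
    have h2 : (d₂ : ℝ) * c = (2 * l + 1) * π / 2 := hl
    push_cast
    have e : 2 * (d₂ : ℝ) * m * π = (d₁ : ℝ) * (2 * l + 1) * π := by
      calc 2 * (d₂ : ℝ) * m * π = 2 * (d₂ : ℝ) * ((m : ℝ) * π) := by ring
        _ = 2 * (d₂ : ℝ) * ((d₁ : ℝ) * c) := by rw [h1]
        _ = 2 * (d₁ : ℝ) * ((d₂ : ℝ) * c) := by ring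
        _ = 2 * (d₁ : ℝ) * ((2 * (l : ℝ) + 1) * π / 2) := by rw [h2]
        _ = (d₁ : ℝ) * (2 * l + 1) * π := by ring
    exact mul_right_cancel₀ hπ e
  have keyZ : (2 * d₂ * m : ℤ) = (d₁ : ℤ) * (2 * l + 1) := by exact_mod_cast key
  have hodd' : Odd ((d₁ : ℤ) * (2 * l + 1)) :=
    (Int.odd_mul).mpr ⟨by exact_mod_cast hodd.natCast, ⟨l, by ring⟩⟩
  rw [← keyZ] at hodd'
  exact (Int.not_odd_iff_even.mpr ⟨d₂ * m, by ring⟩) hodd'
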